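/- If Γ is the contraction of Δ by α, then the expansion Γ^α is isomorphic to Δ as a simplicial complex (there is a bijection of vertex sets carrying faces to faces in both directions). -/

import Mathlib

open Finset

/-- An abstract simplicial complex on vertex type `V`: a downward closed
family of finite subsets of `V`. -/
structure AbstractComplex (V : Type*) where
  faces : Set (Finset V)
  down_closed : ∀ {s t : Finset V}, s ∈ faces → t ⊆ s → t ∈ faces

namespace AbstractComplex

variable {V : Type*}

/-- A facet is a maximal face. -/
def IsFacet (Δ : AbstractComplex V) (s : Finset V) : Prop :=
  s ∈ Δ.faces ∧ ∀ t ∈ Δ.faces, s ⊆ t → s = t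

/-- A complex is pure if all facets have the same cardinality. -/
def IsPure (Δ : AbstractComplex V) : Prop :=
  ∀ s t : Finset V, Δ.IsFacet s → Δ.IsFacet t → s.card = t.card

/-- The link of a (potential) face `F`. -/
def link [DecidableEq V] (Δ : AbstractComplex V) (F : Finset V) : AbstractComplex V where
  faces := {G | G ∩ F = ∅ ∧ G ∪ F ∈ Δ.faces}
  down_closed := by
    rintro s t ⟨h1, h2⟩ hts
    refine ⟨subset_empty.mp ?_, Δ.down_closed h2 (union_subset_union hts subset_rfl)⟩
    exact h1 ▸ inter_subset_inter hts subset_rfl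

/-- The faces of cardinality `q` (i.e. dimension `q - 1`). -/
abbrev Face (Δ : AbstractComplex V) (q : ℕ) := {s : Finset V // s ∈ Δ.faces ∧ s.card = q}

/-- The simplicial boundary map on reduced chains with coefficients in `K`,
from chains spanned by faces of cardinality `q+1` to those spanned by faces of
cardinality `q`. -/
noncomputable def boundary (K : Type*) [Field K] [LinearOrder V]
    (Δ : AbstractComplex V) (q : ℕ) :
    (Δ.Face (q + 1) →₀ K) →ₗ[K] (Δ.Face q →₀ K) :=
  Finsupp.lsum K fun s => LinearMap.toSpanSingleton K _
    (∑ x ∈ s.1.attach,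
      ((-1 : K) ^ (s.1.filter (fun y => y < x.1)).card) •
        Finsupp.single (⟨s.1.erase x.1,
          Δ.down_closed s.2.1 (erase_subset _ _), by
            rw [card_erase_of_mem x.2, s.2.2]; omega⟩ : Δ.Face q) (1 : K))

/-- `Δ.RHTriv K i` says that the `i`-th reduced simplicial homology of `Δ`
with coefficients in `K` vanishes. -/
def RHTriv (K : Type*) [Field K] [LinearOrder V] (Δ : AbstractComplex V) : ℤ → Prop
  | Int.ofNat i =>
      LinearMap.ker (Δ.boundary K i) ≤ LinearMap.range (Δ.boundary K (i + 1))
  | Int.negSucc 0 => ⊤ ≤ LinearMap.range (Δ.boundary K 0)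
  | Int.negSucc (_ + 1) => True

/-- `Δ.dimLT i` means `i < dim Δ`. -/
def dimLT (Δ : AbstractComplex V) (i : ℤ) : Prop :=
  ∃ s ∈ Δ.faces, i + 2 ≤ (s.card : ℤ)

/-- Cohen–Macaulayness over `K`, via Reisner's criterion. -/
def IsCM (K : Type*) [Field K] [LinearOrder V] (Δ : AbstractComplex V) : Prop :=
  ∀ F ∈ Δ.faces, ∀ i : ℤ, (Δ.link F).dimLT i → (Δ.link F).RHTriv K i

/-- `CM_t`: pure, and the link of every face of cardinality at least `t`
is Cohen–Macaulay. -/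
def IsCMt (K : Type*) [Field K] [LinearOrder V] (t : ℕ) (Δ : AbstractComplex V) : Prop :=
  Δ.IsPure ∧ ∀ F ∈ Δ.faces, t ≤ F.card → IsCM K (Δ.link F)

/-- Buchsbaum-ness: pure and the reduced homology of the link of every nonempty
face vanishes below its dimension. -/
def IsBuchsbaum (K : Type*) [Field K] [LinearOrder V] (Δ : AbstractComplex V) : Prop :=
  Δ.IsPure ∧ ∀ G ∈ Δ.faces, G ≠ ∅ →
    ∀ i : ℤ, (Δ.link G).dimLT i → (Δ.link G).RHTriv K i

end AbstractComplex

/-- The expansion `F^α` of a finite vertex set. -/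
def expandSet {V : Type*} (α : V → ℕ) (F : Finset V) : Finset (Σ i, Fin (α i)) :=
  F.sigma fun _ => Finset.univ

namespace AbstractComplex

/-- The expansion `Δ^α` of a simplicial complex: the complex generated by the
expansions of the facets of `Δ`. -/
def expand {V : Type*} (Δ : AbstractComplex V) (α : V → ℕ) :
    AbstractComplex (Σ i, Fin (α i)) where
  faces := {σ | ∃ F, Δ.IsFacet F ∧ σ ⊆ expandSet α F}
  down_closed := fun ⟨F, hF, hsub⟩ hts => ⟨F, hF, hts.trans hsub⟩

end AbstractComplex

/-- A linear order on the expanded vertex set (lexicographic). -/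
noncomputable instance sigmaFinLinearOrder {V : Type*} [LinearOrder V] {α : V → ℕ} :
    LinearOrder (Σ i, Fin (α i)) :=
  LinearOrder.lift' (toLex : (Σ i, Fin (α i)) → Σₗ i, Fin (α i)) toLex.injective

namespace AbstractComplex

variable {V : Type*}

/-- Two vertices are equivalent iff they lie in exactly the same facets. -/
def contractSetoid (Δ : AbstractComplex V) : Setoid V where
  r x y := ∀ F : Finset V, Δ.IsFacet F → (x ∈ F ↔ y ∈ F)
  iseqv := ⟨fun _ _ _ => Iff.rfl, fun h F hF => (h F hF).symm,
    fun h1 h2 F hF => (h1 F hF).trans (h2 F hF)⟩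

/-- The contraction of `Δ`: the complex on the equivalence classes of vertices,
whose facets are the images of the facets of `Δ`. -/
def contraction (Δ : AbstractComplex V) : AbstractComplex (Quotient Δ.contractSetoid) where
  faces := {σ | ∃ F : Finset V, Δ.IsFacet F ∧
    ∀ y ∈ σ, ∃ x ∈ F, Quotient.mk Δ.contractSetoid x = y}
  down_closed := fun ⟨F, hF, h⟩ hts => ⟨F, hF, fun y hy => h y (hts hy)⟩

/-- The size of an equivalence class of vertices: the components of the vector
obtained from contraction. -/
noncomputable def classSize (Δ : AbstractComplex V) (y : Quotient Δ.contractSetoid) : ℕ :=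
  Nat.card {x : V // Quotient.mk Δ.contractSetoid x = y}

end AbstractComplex

noncomputable instance quotLinearOrder {V : Type*} [LinearOrder V] {s : Setoid V} :
    LinearOrder (Quotient s) :=
  LinearOrder.lift' Quotient.out Quotient.out_injective

/-- if `Γ` is the contraction of `Δ` by `α`, then `Γ^α ≅ Δ`:
there is a bijection of vertex sets carrying faces to faces in both directions. -/
theorem expand_contraction_iso {V : Type*} [Fintype V] [DecidableEq V]
    (Δ : AbstractComplex V) :
    ∃ e : (Σ y : Quotient Δ.contractSetoid, Fin (Δ.classSize y)) ≃ V,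
      ∀ σ : Finset (Σ y : Quotient Δ.contractSetoid, Fin (Δ.classSize y)),
        σ ∈ (Δ.contraction.expand Δ.classSize).faces ↔ σ.image e ∈ Δ.faces := by
  classical
  obtain ⟨e, he⟩ : ∃ e : (Σ y : Quotient Δ.contractSetoid, Fin (Δ.classSize y)) ≃ V,
      ∀ p, Quotient.mk Δ.contractSetoid (e p) = p.1 := by
    refine ⟨(Equiv.sigmaCongrRight fun y =>
        (Finite.equivFin {x : V // Quotient.mk Δ.contractSetoid x = y}).symm).trans
        (Equiv.sigmaFiberEquiv (Quotient.mk Δ.contractSetoid)), ?_⟩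
    rintro ⟨y, i⟩
    exact ((Finite.equivFin _).symm i).2
  refine ⟨e, fun σ => ⟨?_, ?_⟩⟩
  · rintro ⟨G, ⟨⟨F, hF, hFG⟩, -⟩, hσG⟩
    refine Δ.down_closed hF.1 ?_
    intro v hv
    simp only [Finset.mem_image] at hv
    obtain ⟨p, hp, rfl⟩ := hv
    have hy : p.1 ∈ G := by
      have := hσG hp
      simpa [expandSet, Finset.mem_sigma] using this
    obtain ⟨x, hx, hxy⟩ := hFG p.1 hy
    have hr : Δ.contractSetoid.r x (e p) := Quotient.exact (hxy.trans (he p).symm)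
    exact (hr F hF).mp hx
  · intro hσ
    obtain ⟨F, hF, hsub⟩ : ∃ F, Δ.IsFacet F ∧ σ.image e ⊆ F := by
      obtain ⟨F, ⟨hF, hsF⟩, hmax⟩ := Set.Finite.exists_maximalFor id
        {t | t ∈ Δ.faces ∧ σ.image e ⊆ t} (Set.toFinite _) ⟨_, hσ, Finset.Subset.refl _⟩
      exact ⟨F, ⟨hF, fun t ht hFt => Finset.Subset.antisymm hFt (hmax ⟨ht, hsF.trans hFt⟩ hFt)⟩, hsF⟩
    refine ⟨F.image (Quotient.mk Δ.contractSetoid), ⟨⟨F, hF,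
      fun y hy => Finset.mem_image.mp hy⟩, ?_⟩, ?_⟩
    · rintro H ⟨F', hF', hH⟩ hGH
      have hFF' : F = F' := by
        apply hF.2 F' hF'.1
        intro x hx
        have hxH : Quotient.mk Δ.contractSetoid x ∈ H := hGH (Finset.mem_image_of_mem _ hx)
        obtain ⟨x', hx', hxx'⟩ := hH _ hxH
        have hr : Δ.contractSetoid.r x' x := Quotient.exact hxx'
        exact (hr F' hF').mp hx'
      apply Finset.Subset.antisymm hGH
      intro y hy
      obtain ⟨x, hx, rfl⟩ := hH y hy
      exact Finset.mem_image_of_mem _ (hFF' ▸ hx)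
    · intro p hp
      simp only [expandSet, Finset.mem_sigma, Finset.mem_univ, and_true]
      have hpF : e p ∈ F := hsub (Finset.mem_image_of_mem _ hp)
      exact (he p) ▸ Finset.mem_image_of_mem _ hpF
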